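/- Let C ⊆ ℝⁿ be a closed, convex, pointed cone with nonempty interior and let 𝒫 be a part of End(int C). Then the map sending a pair (𝒜,ℬ) of nonempty compact subsets of 𝒫, equipped with the Hausdorff distance induced by the Thompson metric on 𝒫, to the competitive spectral radius ρ(𝒜,ℬ) of the matrix multiplication game with operators T_{AB}(x) = xAB, is 1-Lipschitz: |ρ(𝒜,ℬ) − ρ(𝒜',ℬ')| ≤ δ_H(𝒜,𝒜') + δ_H(ℬ,ℬ'). -/

import Mathlib

set_option linter.unusedSectionVars false
set_option linter.unusedVariables false


open Set Filter

/-- The Funk hemi-metric on a cone `C`. -/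
noncomputable def funk {n : ℕ} (C : Set (Fin n → ℝ)) (x y : Fin n → ℝ) : ℝ :=
  Real.log (sInf {l : ℝ | 0 < l ∧ l • y - x ∈ C})

/-- `End(int C)`: matrices whose right action on row vectors preserves the interior
of the cone `C`. -/
def EndInt {n : ℕ} (C : Set (Fin n → ℝ)) : Set (Matrix (Fin n) (Fin n) ℝ) :=
  {A | ∀ x ∈ interior C, Matrix.vecMul x A ∈ interior C}

/-- The order on operators: `A ≤ A'` iff `x A ≤_C x A'` for all `x ∈ int C`. -/
def opLE {n : ℕ} (C : Set (Fin n → ℝ)) (A A' : Matrix (Fin n) (Fin n) ℝ) : Prop :=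
  ∀ x ∈ interior C, Matrix.vecMul x A' - Matrix.vecMul x A ∈ C

/-- Comparability of operators: `μ A ≤ A' ≤ λ A` for some `μ, λ > 0`. -/
def opComparable {n : ℕ} (C : Set (Fin n → ℝ)) (A A' : Matrix (Fin n) (Fin n) ℝ) : Prop :=
  ∃ μ : ℝ, 0 < μ ∧ ∃ l : ℝ, 0 < l ∧ opLE C (μ • A) A' ∧ opLE C A' (l • A)

/-- A part of `End(int C)`: a comparability class. -/
def IsOpPart {n : ℕ} (C : Set (Fin n → ℝ)) (P : Set (Matrix (Fin n) (Fin n) ℝ)) : Prop :=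
  ∃ A₀ ∈ EndInt C, P = {A ∈ EndInt C | opComparable C A₀ A}

/-- The Funk metric on operators. -/
noncomputable def opFunk {n : ℕ} (C : Set (Fin n → ℝ))
    (A A' : Matrix (Fin n) (Fin n) ℝ) : ℝ :=
  Real.log (sInf {l : ℝ | 0 < l ∧
    ∀ x ∈ interior C, l • Matrix.vecMul x A' - Matrix.vecMul x A ∈ C})

/-- The Thompson metric on operators. -/
noncomputable def opThompson {n : ℕ} (C : Set (Fin n → ℝ))
    (A A' : Matrix (Fin n) (Fin n) ℝ) : ℝ :=
  max (opFunk C A A') (opFunk C A' A)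

/-- The Hausdorff distance induced by the Thompson metric on sets of operators. -/
noncomputable def hausT {n : ℕ} (C : Set (Fin n → ℝ))
    (A A' : Set (Matrix (Fin n) (Fin n) ℝ)) : ℝ :=
  max (⨆ M : A, ⨅ M' : A', opThompson C M M') (⨆ M' : A', ⨅ M : A, opThompson C M M')

/-- The Shapley operator of the matrix multiplication game with `T_{AB}(x) = x A B`. -/
noncomputable def mshapley {n : ℕ} (A B : Set (Matrix (Fin n) (Fin n) ℝ)) :
    ((Fin n → ℝ) → ℝ) → (Fin n → ℝ) → ℝ :=
  fun v x => ⨅ M : A, ⨆ N : B,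
    v (Matrix.vecMul (Matrix.vecMul x (M : Matrix (Fin n) (Fin n) ℝ)) (N : Matrix (Fin n) (Fin n) ℝ))


section GCone

variable {E : Type*} [AddCommGroup E] [Module ℝ E] [TopologicalSpace E]
  [IsTopologicalAddGroup E] [ContinuousSMul ℝ E]

/-- The set of scalars `l` such that `x ≤ l • y` in the cone order. -/
def gSet (K : Set E) (x y : E) : Set ℝ := {l : ℝ | 0 < l ∧ l • y - x ∈ K}

lemma gSet_eq {K : Set E} {x y : E} (hx : -x ∉ K) :
    gSet K x y = {l : ℝ | 0 ≤ l ∧ l • y - x ∈ K} := by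
  ext l
  constructor
  · rintro ⟨h1, h2⟩; exact ⟨h1.le, h2⟩
  · rintro ⟨h1, h2⟩
    refine ⟨lt_of_le_of_ne h1 ?_, h2⟩
    rintro rfl
    rw [zero_smul, zero_sub] at h2
    exact hx h2

lemma gSet_isClosed {K : Set E} (hK : IsClosed K) {x y : E} (hx : -x ∉ K) :
    IsClosed (gSet K x y) := by
  rw [gSet_eq hx]
  have : {l : ℝ | 0 ≤ l ∧ l • y - x ∈ K} =
      Ici (0:ℝ) ∩ ((fun l : ℝ => l • y - x) ⁻¹' K) := rfl
  rw [this]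
  exact isClosed_Ici.inter (hK.preimage ((continuous_id.smul continuous_const).sub
    continuous_const))

lemma gSet_bddBelow {K : Set E} (x y : E) : BddBelow (gSet K x y) :=
  ⟨0, fun l hl => hl.1.le⟩

lemma gSet_sInf_mem {K : Set E} (hK : IsClosed K) {x y : E} (hx : -x ∉ K)
    (hne : (gSet K x y).Nonempty) : sInf (gSet K x y) ∈ gSet K x y :=
  (gSet_isClosed hK hx).csInf_mem hne (gSet_bddBelow x y)

lemma gSet_mul_mem {K : Set E}
    (hadd : ∀ a ∈ K, ∀ b ∈ K, a + b ∈ K)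
    (hsmul : ∀ a ∈ K, ∀ r : ℝ, 0 ≤ r → r • a ∈ K)
    {x y z : E} {l l' : ℝ} (hl : l ∈ gSet K x y) (hl' : l' ∈ gSet K y z) :
    l * l' ∈ gSet K x z := by
  refine ⟨mul_pos hl.1 hl'.1, ?_⟩
  have h1 : l • (l' • z - y) ∈ K := hsmul _ hl'.2 l hl.1.le
  have h2 : l • (l' • z - y) + (l • y - x) ∈ K := hadd _ h1 _ hl.2
  have : l • (l' • z - y) + (l • y - x) = (l * l') • z - x := by
    rw [smul_sub, smul_smul]; abel
  rwa [this] at h2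

/-- If the reverse set is nonempty and `-x ∉ K`, every element of `gSet K x y` has a
positive lower bound. -/
lemma gSet_one_le_mul {K : Set E}
    (hadd : ∀ a ∈ K, ∀ b ∈ K, a + b ∈ K)
    (hsmul : ∀ a ∈ K, ∀ r : ℝ, 0 ≤ r → r • a ∈ K)
    {x y : E} (hx : -x ∉ K) {l l' : ℝ}
    (hl : l ∈ gSet K x y) (hl' : l' ∈ gSet K y x) : 1 ≤ l * l' := by
  by_contra hlt
  push_neg at hlt
  have hmem : l * l' ∈ gSet K x x := gSet_mul_mem hadd hsmul hl hl'
  have h2 : (l * l') • x - x ∈ K := hmem.2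
  have h3 : ((1:ℝ) - l * l')⁻¹ • ((l * l') • x - x) ∈ K :=
    hsmul _ h2 _ (by have : l * l' < 1 := hlt; linarith [inv_nonneg.mpr (le_of_lt (sub_pos.mpr this))])
  have h4 : ((1:ℝ) - l * l')⁻¹ • ((l * l') • x - x) = -x := by
    have hne : (1:ℝ) - l * l' ≠ 0 := by nlinarith
    rw [smul_sub, smul_smul]
    rw [sub_eq_iff_eq_add]
    have : ((1:ℝ) - l * l')⁻¹ * (l * l') = ((1:ℝ) - l * l')⁻¹ - 1 := by
      field_simp
      ring
    rw [this, sub_smul, one_smul]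
    abel
  rw [h4] at h3
  exact hx h3

lemma gSet_sInf_pos {K : Set E}
    (hadd : ∀ a ∈ K, ∀ b ∈ K, a + b ∈ K)
    (hsmul : ∀ a ∈ K, ∀ r : ℝ, 0 ≤ r → r • a ∈ K)
    {x y : E} (hx : -x ∉ K)
    (hne : (gSet K x y).Nonempty) (hrev : (gSet K y x).Nonempty) :
    0 < sInf (gSet K x y) := by
  obtain ⟨l', hl'⟩ := hrev
  have hlb : ∀ l ∈ gSet K x y, 1 / l' ≤ l := by
    intro l hl
    have h1 := gSet_one_le_mul hadd hsmul hx hl hl'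
    rw [div_le_iff₀ hl'.1]
    nlinarith
  have hl'pos := hl'.1
  calc (0:ℝ) < 1 / l' := by positivity
    _ ≤ sInf (gSet K x y) := le_csInf hne hlb

lemma gSet_sInf_le {K : Set E} {x y : E} {l : ℝ} (hl : l ∈ gSet K x y) :
    sInf (gSet K x y) ≤ l :=
  csInf_le (gSet_bddBelow x y) hl

end GCone
section GCone2

variable {E : Type*} [AddCommGroup E] [Module ℝ E] [TopologicalSpace E]
  [IsTopologicalAddGroup E] [ContinuousSMul ℝ E]

/-- The Funk hemi-metric of a general cone. -/
noncomputable def gfk (K : Set E) (x y : E) : ℝ := Real.log (sInf (gSet K x y))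

lemma gfk_le_log {K : Set E} {x y : E} {l : ℝ} (hl : l ∈ gSet K x y)
    (hpos : 0 < sInf (gSet K x y)) : gfk K x y ≤ Real.log l :=
  (Real.log_le_log_iff hpos (lt_of_lt_of_le hpos (gSet_sInf_le hl))).2 (gSet_sInf_le hl)

lemma gfk_triangle {K : Set E} (hK : IsClosed K)
    (hadd : ∀ a ∈ K, ∀ b ∈ K, a + b ∈ K)
    (hsmul : ∀ a ∈ K, ∀ r : ℝ, 0 ≤ r → r • a ∈ K)
    {x y z : E} (hx : -x ∉ K) (hy : -y ∉ K)
    (hxy : (gSet K x y).Nonempty) (hyx : (gSet K y x).Nonempty)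
    (hyz : (gSet K y z).Nonempty) (hzy : (gSet K z y).Nonempty) :
    gfk K x z ≤ gfk K x y + gfk K y z := by
  have hxy_mem := gSet_sInf_mem hK hx hxy
  have hyz_mem := gSet_sInf_mem hK hy hyz
  have hxy_pos := gSet_sInf_pos hadd hsmul hx hxy hyx
  have hyz_pos := gSet_sInf_pos hadd hsmul hy hyz hzy
  have hmul : sInf (gSet K x y) * sInf (gSet K y z) ∈ gSet K x z :=
    gSet_mul_mem hadd hsmul hxy_mem hyz_mem
  have hxz_pos : 0 < sInf (gSet K x z) := by
    have h1 : (gSet K x z).Nonempty := ⟨_, hmul⟩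
    have h2 : (gSet K z x).Nonempty :=
      ⟨_, gSet_mul_mem hadd hsmul hzy.some_mem hyx.some_mem⟩
    exact gSet_sInf_pos hadd hsmul hx h1 h2
  calc gfk K x z ≤ Real.log (sInf (gSet K x y) * sInf (gSet K y z)) := by
        exact (Real.log_le_log_iff hxz_pos (mul_pos hxy_pos hyz_pos)).2 (gSet_sInf_le hmul)
    _ = gfk K x y + gfk K y z := Real.log_mul (ne_of_gt hxy_pos) (ne_of_gt hyz_pos)

lemma gfk_pair_nonneg {K : Set E}
    (hadd : ∀ a ∈ K, ∀ b ∈ K, a + b ∈ K)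
    (hsmul : ∀ a ∈ K, ∀ r : ℝ, 0 ≤ r → r • a ∈ K)
    {x y : E} (hx : -x ∉ K)
    (hxy : (gSet K x y).Nonempty) (hyx : (gSet K y x).Nonempty) :
    0 ≤ gfk K x y + gfk K y x := by
  have h1 := gSet_sInf_pos hadd hsmul hx hxy hyx
  have hy : -y ∉ K := by
    intro hyK
    obtain ⟨l, hl⟩ := hxy
    -- l • y - x ∈ K, l • (-y) ∈ K so -x ∈ K? -x = (l•y - x) + l•(-y)
    have h2 : l • (-y) ∈ K := hsmul _ hyK l hl.1.le
    have h3 : (l • y - x) + l • (-y) ∈ K := hadd _ hl.2 _ h2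
    have h4 : (l • y - x) + l • (-y) = -x := by rw [smul_neg]; abel
    rw [h4] at h3
    -- now -x ∈ K; also need contradiction with hx
    exact hx h3
  have h2 := gSet_sInf_pos hadd hsmul hy hyx hxy
  have k2 : ∀ l' ∈ gSet K y x, 1 / l' ≤ sInf (gSet K x y) := by
    intro l' hl'
    refine le_csInf hxy (fun l hl => ?_)
    rw [div_le_iff₀ hl'.1]
    exact gSet_one_le_mul hadd hsmul hx hl hl'
  have k3 : 1 / sInf (gSet K x y) ≤ sInf (gSet K y x) := by
    refine le_csInf hyx (fun l' hl' => ?_)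
    have h4 := (div_le_iff₀ hl'.1).1 (k2 l' hl')
    rw [div_le_iff₀ h1]
    linarith [h4, mul_comm (sInf (gSet K x y)) l']
  have hle : 1 ≤ sInf (gSet K x y) * sInf (gSet K y x) := by
    have h5 := (div_le_iff₀ h1).1 k3
    linarith [mul_comm (sInf (gSet K y x)) (sInf (gSet K x y))]
  have := Real.log_le_log_iff (by norm_num : (0:ℝ) < 1) (mul_pos h1 h2) |>.2 hle
  rw [Real.log_one, Real.log_mul (ne_of_gt h1) (ne_of_gt h2)] at this
  simpa [gfk] using this

end GCone2
/-- Bundled hypotheses on the cone `C` (non-degenerate case). -/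
structure ConeHyp {n : ℕ} (C : Set (Fin n → ℝ)) : Prop where
  closed : IsClosed C
  conv : Convex ℝ C
  cone : ∀ x ∈ C, ∀ r : ℝ, 0 ≤ r → r • x ∈ C
  pointed : ∀ x ∈ C, -x ∈ C → x = 0
  int : (interior C).Nonempty
  nz : (0 : Fin n → ℝ) ∉ interior C

section OpCone

/-- The cone of matrices mapping the interior of `C` into `C`. -/
def opCone {n : ℕ} (C : Set (Fin n → ℝ)) : Set (Matrix (Fin n) (Fin n) ℝ) :=
  {M | ∀ x ∈ interior C, Matrix.vecMul x M ∈ C}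

variable {n : ℕ} {C : Set (Fin n → ℝ)}

lemma vecMul_smul_mat (x : Fin n → ℝ) (c : ℝ) (M : Matrix (Fin n) (Fin n) ℝ) :
    Matrix.vecMul x (c • M) = c • Matrix.vecMul x M := by
  ext j; simp [Matrix.vecMul, dotProduct, Finset.mul_sum, mul_left_comm]

variable (hC : ConeHyp C)

include hC

lemma zero_mem_C : (0 : Fin n → ℝ) ∈ C := by
  obtain ⟨e, he⟩ := hC.int
  simpa using hC.cone e (interior_subset he) 0 le_rfl

lemma add_mem_C {a b : Fin n → ℝ} (ha : a ∈ C) (hb : b ∈ C) : a + b ∈ C := by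
  have h := hC.conv ha hb (by norm_num : (0:ℝ) ≤ 1/2) (by norm_num : (0:ℝ) ≤ 1/2) (by norm_num)
  have h2 := hC.cone _ h 2 (by norm_num)
  have : (2:ℝ) • ((1/2 : ℝ) • a + (1/2 : ℝ) • b) = a + b := by
    rw [smul_add, smul_smul, smul_smul]; norm_num
  rwa [this] at h2

lemma neg_notin_C {x : Fin n → ℝ} (hx : x ∈ interior C) : -x ∉ C := by
  intro hneg
  have hx0 := hC.pointed x (interior_subset hx) hneg
  rw [hx0] at hx
  exact hC.nz hx

lemma gSet_C_nonempty {x y : Fin n → ℝ} (hx : x ∈ interior C) (hy : y ∈ interior C) :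
    (gSet C x y).Nonempty := by
  have htend : Tendsto (fun k : ℕ => y - (1 / ((k:ℝ) + 1)) • x) atTop (nhds y) := by
    have h1 : Tendsto (fun k : ℕ => (1 / ((k:ℝ) + 1))) atTop (nhds 0) :=
      tendsto_one_div_add_atTop_nhds_zero_nat
    have h2 : Tendsto (fun k : ℕ => (1 / ((k:ℝ) + 1)) • x) atTop (nhds ((0:ℝ) • x)) :=
      h1.smul_const x
    rw [zero_smul] at h2
    simpa using (tendsto_const_nhds (x := y)).sub h2
  have hev := htend.eventually (isOpen_interior.mem_nhds hy)
  obtain ⟨k, hk⟩ := hev.exists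
  refine ⟨(k:ℝ) + 1, by positivity, ?_⟩
  have h3 : ((k:ℝ) + 1) • (y - (1 / ((k:ℝ) + 1)) • x) ∈ C :=
    hC.cone _ (interior_subset hk) _ (by positivity)
  have h4 : ((k:ℝ) + 1) • (y - (1 / ((k:ℝ) + 1)) • x) = ((k:ℝ) + 1) • y - x := by
    rw [smul_sub, smul_smul]
    congr 2
    have : ((k:ℝ) + 1) ≠ 0 := by positivity
    field_simp
    simp
  rwa [h4] at h3

lemma mapsC {M : Matrix (Fin n) (Fin n) ℝ} (hM : M ∈ EndInt C) {z : Fin n → ℝ}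
    (hz : z ∈ C) : Matrix.vecMul z M ∈ C := by
  obtain ⟨e, he⟩ := hC.int
  have hmem : ∀ k : ℕ, (1 / ((k:ℝ) + 1)) • e + (1 - 1 / ((k:ℝ) + 1)) • z ∈ interior C := by
    intro k
    refine hC.conv.combo_interior_self_mem_interior he hz (by positivity) ?_ (by ring)
    have : 1 / ((k:ℝ) + 1) ≤ 1 := by
      rw [div_le_one (by positivity)]; linarith [Nat.cast_nonneg (α := ℝ) k]
    linarith
  have hv : ∀ k : ℕ, (1 / ((k:ℝ) + 1)) • Matrix.vecMul e M
      + (1 - 1 / ((k:ℝ) + 1)) • Matrix.vecMul z M ∈ C := by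
    intro k
    have := interior_subset (hM _ (hmem k))
    rwa [Matrix.add_vecMul, Matrix.smul_vecMul, Matrix.smul_vecMul] at this
  have htend : Tendsto (fun k : ℕ => (1 / ((k:ℝ) + 1)) • Matrix.vecMul e M
      + (1 - 1 / ((k:ℝ) + 1)) • Matrix.vecMul z M) atTop (nhds (Matrix.vecMul z M)) := by
    have h1 : Tendsto (fun k : ℕ => (1 / ((k:ℝ) + 1))) atTop (nhds 0) :=
      tendsto_one_div_add_atTop_nhds_zero_nat
    have h2 := (h1.smul_const (Matrix.vecMul e M)).add
      (((tendsto_const_nhds (x := (1:ℝ))).sub h1).smul_const (Matrix.vecMul z M))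
    simpa using h2
  exact hC.closed.mem_of_tendsto htend (Filter.Eventually.of_forall hv)

lemma EndInt_subset_opCone : EndInt C ⊆ opCone C :=
  fun _ hM x hx => interior_subset (hM x hx)

lemma opCone_closed : IsClosed (opCone C) := by
  have : opCone C = ⋂ x ∈ interior C, {M : Matrix (Fin n) (Fin n) ℝ | Matrix.vecMul x M ∈ C} := by
    ext M; simp [opCone]
  rw [this]
  refine isClosed_biInter (fun x _ => ?_)
  have hcont : Continuous (fun M : Matrix (Fin n) (Fin n) ℝ => Matrix.vecMul x M) := by
    refine continuous_pi (fun j => ?_)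
    simp only [Matrix.vecMul, dotProduct]
    exact continuous_finset_sum _ fun i _ =>
      continuous_const.mul ((continuous_apply j).comp (continuous_apply i))
  exact hC.closed.preimage hcont

lemma opCone_add {M N : Matrix (Fin n) (Fin n) ℝ} (hM : M ∈ opCone C) (hN : N ∈ opCone C) :
    M + N ∈ opCone C := by
  intro x hx
  have := add_mem_C hC (hM x hx) (hN x hx)
  rwa [← Matrix.vecMul_add] at this

lemma opCone_smul {M : Matrix (Fin n) (Fin n) ℝ} (hM : M ∈ opCone C) {r : ℝ} (hr : 0 ≤ r) :
    r • M ∈ opCone C := by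
  intro x hx
  rw [vecMul_smul_mat]
  exact hC.cone _ (hM x hx) r hr

lemma opCone_zero : (0 : Matrix (Fin n) (Fin n) ℝ) ∈ opCone C := by
  intro x hx
  rw [Matrix.vecMul_zero]
  exact zero_mem_C hC

lemma opLE_iff {M M' : Matrix (Fin n) (Fin n) ℝ} :
    opLE C M M' ↔ M' - M ∈ opCone C := by
  constructor
  · intro h x hx
    rw [Matrix.vecMul_sub]
    exact h x hx
  · intro h x hx
    have := h x hx
    rwa [Matrix.vecMul_sub] at this

lemma opFunk_eq_gfk (M M' : Matrix (Fin n) (Fin n) ℝ) :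
    opFunk C M M' = gfk (opCone C) M M' := by
  have hset : {l : ℝ | 0 < l ∧
      ∀ x ∈ interior C, l • Matrix.vecMul x M' - Matrix.vecMul x M ∈ C}
      = gSet (opCone C) M M' := by
    ext l
    simp only [gSet, mem_setOf_eq, and_congr_right_iff]
    intro _
    constructor
    · intro h x hx
      rw [Matrix.vecMul_sub, vecMul_smul_mat]
      exact h x hx
    · intro h x hx
      have := h x hx
      rwa [Matrix.vecMul_sub, vecMul_smul_mat] at this
  rw [opFunk, hset, gfk]

lemma exists_pos_dir {x : Fin n → ℝ} (hx : x ∈ interior C) (u : Fin n → ℝ) :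
    ∃ t : ℝ, 0 < t ∧ x + t • u ∈ interior C := by
  have hcont : Continuous fun t : ℝ => x + t • u :=
    continuous_const.add (continuous_id.smul continuous_const)
  have htend : Tendsto (fun t : ℝ => x + t • u) (nhds 0) (nhds x) := by
    have := hcont.tendsto 0
    simpa using this
  have hev : ∀ᶠ t in nhds (0:ℝ), x + t • u ∈ interior C :=
    htend.eventually (isOpen_interior.mem_nhds hx)
  have hev2 : ∀ᶠ t in nhdsWithin (0:ℝ) (Ioi 0), x + t • u ∈ interior C ∧ 0 < t := by
    refine Filter.Eventually.and (nhdsWithin_le_nhds hev) ?_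
    exact eventually_mem_nhdsWithin
  obtain ⟨t, ht1, ht2⟩ := hev2.exists
  exact ⟨t, ht2, ht1⟩

lemma opCone_pointed {M : Matrix (Fin n) (Fin n) ℝ} (hM : M ∈ opCone C)
    (hM' : -M ∈ opCone C) : M = 0 := by
  have hall : ∀ x ∈ interior C, Matrix.vecMul x M = 0 := by
    intro x hx
    refine hC.pointed _ (hM x hx) ?_
    have := hM' x hx
    rwa [Matrix.vecMul_neg] at this
  obtain ⟨e, he⟩ := hC.int
  ext i j
  obtain ⟨t, ht, hmem⟩ := exists_pos_dir hC he ((Pi.single i 1 : Fin n → ℝ))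
  have h1 : Matrix.vecMul (e + t • (Pi.single i 1 : Fin n → ℝ)) M = 0 := hall _ hmem
  have h2 : Matrix.vecMul e M = 0 := hall _ he
  rw [Matrix.add_vecMul, h2, zero_add, Matrix.smul_vecMul] at h1
  have h3 : Matrix.vecMul ((Pi.single i 1 : Fin n → ℝ)) M = 0 := by
    have := smul_eq_zero.mp h1
    rcases this with h | h
    · exact absurd h (ne_of_gt ht)
    · exact h
  have h4 : Matrix.vecMul ((Pi.single i 1 : Fin n → ℝ)) M = M i := Matrix.single_one_vecMul i M
  rw [h4] at h3
  simpa using congrFun h3 j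

end OpCone
section Wrappers

variable {n : ℕ} {C : Set (Fin n → ℝ)} (hC : ConeHyp C)

include hC

lemma addC' : ∀ a ∈ C, ∀ b ∈ C, a + b ∈ C := fun _ ha _ hb => add_mem_C hC ha hb

lemma funkC_pos {x y : Fin n → ℝ} (hx : x ∈ interior C) (hy : y ∈ interior C) :
    0 < sInf (gSet C x y) :=
  gSet_sInf_pos (addC' hC) hC.cone (neg_notin_C hC hx)
    (gSet_C_nonempty hC hx hy) (gSet_C_nonempty hC hy hx)

lemma funkC_le_log {x y : Fin n → ℝ} (hx : x ∈ interior C) (hy : y ∈ interior C)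
    {l : ℝ} (hl : l ∈ gSet C x y) : gfk C x y ≤ Real.log l :=
  gfk_le_log hl (funkC_pos hC hx hy)

lemma funkC_tri {x y z : Fin n → ℝ} (hx : x ∈ interior C) (hy : y ∈ interior C)
    (hz : z ∈ interior C) : gfk C x z ≤ gfk C x y + gfk C y z :=
  gfk_triangle hC.closed (addC' hC) hC.cone (neg_notin_C hC hx) (neg_notin_C hC hy)
    (gSet_C_nonempty hC hx hy) (gSet_C_nonempty hC hy hx)
    (gSet_C_nonempty hC hy hz) (gSet_C_nonempty hC hz hy)

lemma funkC_vecMul_le {y z : Fin n → ℝ} (hy : y ∈ interior C) (hz : z ∈ interior C)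
    {M : Matrix (Fin n) (Fin n) ℝ} (hM : M ∈ EndInt C) :
    gfk C (Matrix.vecMul y M) (Matrix.vecMul z M) ≤ gfk C y z := by
  have hmem := gSet_sInf_mem hC.closed (neg_notin_C hC hy) (gSet_C_nonempty hC hy hz)
  have hc : Matrix.vecMul (sInf (gSet C y z) • z - y) M ∈ C := mapsC hC hM hmem.2
  rw [Matrix.sub_vecMul, Matrix.smul_vecMul] at hc
  exact funkC_le_log hC (hM y hy) (hM z hz) ⟨hmem.1, hc⟩

variable {A₀ : Matrix (Fin n) (Fin n) ℝ} (hA₀ : A₀ ∈ EndInt C)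

lemma comp_up {M : Matrix (Fin n) (Fin n) ℝ} (hMc : opComparable C A₀ M) :
    ∃ l : ℝ, 0 < l ∧ l • A₀ - M ∈ opCone C := by
  obtain ⟨μ, hμ, l, hl, _, h2⟩ := hMc
  exact ⟨l, hl, (opLE_iff hC).1 h2⟩

lemma comp_dn {M : Matrix (Fin n) (Fin n) ℝ} (hMc : opComparable C A₀ M) :
    ∃ μ : ℝ, 0 < μ ∧ M - μ • A₀ ∈ opCone C := by
  obtain ⟨μ, hμ, l, hl, h1, _⟩ := hMc
  exact ⟨μ, hμ, (opLE_iff hC).1 h1⟩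

include hA₀

lemma neg_notin_opCone {M : Matrix (Fin n) (Fin n) ℝ} (hMe : M ∈ EndInt C)
    (hMc : opComparable C A₀ M) : -M ∉ opCone C := by
  intro h
  have hM0 : M = 0 := opCone_pointed hC (EndInt_subset_opCone hC hMe) h
  rw [hM0] at hMc
  obtain ⟨μ, hμ, l, hl, h1, _⟩ := hMc
  obtain ⟨e, he⟩ := hC.int
  have h2 := h1 e he
  rw [Matrix.vecMul_zero, vecMul_smul_mat, zero_sub] at h2
  have h3 : μ • Matrix.vecMul e A₀ ∈ C := hC.cone _ (interior_subset (hA₀ e he)) μ hμ.le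
  have h4 := hC.pointed _ h3 h2
  have h5 : Matrix.vecMul e A₀ = 0 := by
    rcases smul_eq_zero.mp h4 with h | h
    · exact absurd h (ne_of_gt hμ)
    · exact h
  have := hA₀ e he
  rw [h5] at this
  exact hC.nz this

omit hA₀

lemma gSet_op_nonempty {M M' : Matrix (Fin n) (Fin n) ℝ}
    (hMc : opComparable C A₀ M) (hM'c : opComparable C A₀ M') :
    (gSet (opCone C) M M').Nonempty := by
  obtain ⟨l, hl, hup⟩ := comp_up hC hMc
  obtain ⟨μ, hμ, hdn⟩ := comp_dn hC hM'c
  refine ⟨l / μ, div_pos hl hμ, ?_⟩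
  have h := opCone_add hC (opCone_smul hC hdn (le_of_lt (div_pos hl hμ))) hup
  have heq : (l / μ) • (M' - μ • A₀) + (l • A₀ - M) = (l / μ) • M' - M := by
    rw [smul_sub, smul_smul, div_mul_cancel₀ _ (ne_of_gt hμ)]
    abel
  rwa [heq] at h

lemma funk_op_push {x : Fin n → ℝ} (hx : x ∈ interior C)
    {M M' : Matrix (Fin n) (Fin n) ℝ} (hMe : M ∈ EndInt C) (hM'e : M' ∈ EndInt C)
    (hnM : -M ∉ opCone C) (hne : (gSet (opCone C) M M').Nonempty) :
    gfk C (Matrix.vecMul x M) (Matrix.vecMul x M') ≤ gfk (opCone C) M M' := by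
  have hmem := gSet_sInf_mem (opCone_closed hC) hnM hne
  have hc := hmem.2 x hx
  rw [Matrix.vecMul_sub, vecMul_smul_mat] at hc
  exact funkC_le_log hC (hMe x hx) (hM'e x hx) ⟨hmem.1, hc⟩

lemma funk_mem_push {x : Fin n → ℝ} (hx : x ∈ interior C)
    {M M' : Matrix (Fin n) (Fin n) ℝ} {l : ℝ} (hl : l ∈ gSet (opCone C) M M') :
    l ∈ gSet C (Matrix.vecMul x M) (Matrix.vecMul x M') := by
  refine ⟨hl.1, ?_⟩
  have := hl.2 x hx
  rwa [Matrix.vecMul_sub, vecMul_smul_mat] at this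

end Wrappers
section UniformComp

variable {n : ℕ} {C : Set (Fin n → ℝ)}

lemma opCone_sum (hC : ConeHyp C) {ι : Type*} (s : Finset ι)
    (f : ι → Matrix (Fin n) (Fin n) ℝ) (hf : ∀ i ∈ s, f i ∈ opCone C) :
    ∑ i ∈ s, f i ∈ opCone C := by
  classical
  induction s using Finset.induction_on with
  | empty => simpa using opCone_zero hC
  | insert _ _ hnotmem ih =>
    rename_i a s'
    rw [Finset.sum_insert hnotmem]
    exact opCone_add hC (hf a (Finset.mem_insert_self a s'))
      (ih fun i hi => hf i (Finset.mem_insert_of_mem hi))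

lemma uniform_comp (hC : ConeHyp C)
    {A₀ : Matrix (Fin n) (Fin n) ℝ} (hA₀ : A₀ ∈ EndInt C)
    {K4 : Set (Matrix (Fin n) (Fin n) ℝ)} (hK4c : IsCompact K4) (hK4ne : K4.Nonempty)
    (hK4P : ∀ M ∈ K4, M ∈ EndInt C ∧ opComparable C A₀ M) :
    ∃ s t : ℝ, 0 < s ∧ 0 < t ∧
      ∀ M ∈ K4, M - s • A₀ ∈ opCone C ∧ t • A₀ - M ∈ opCone C := by
  classical
  set J := opCone C with hJ
  have hA₀J : A₀ ∈ J := EndInt_subset_opCone hC hA₀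
  set F : Set (Matrix (Fin n) (Fin n) ℝ) :=
    {Z | Z ∈ J ∧ ∃ c : ℝ, 0 < c ∧ c • A₀ - Z ∈ J} with hF
  have hKF : ∀ M ∈ K4, M ∈ F := by
    intro M hM
    refine ⟨EndInt_subset_opCone hC (hK4P M hM).1, ?_⟩
    obtain ⟨l, hl, hup⟩ := comp_up hC (hK4P M hM).2
    exact ⟨l, hl, hup⟩
  obtain ⟨b, hbF, hbspan, hbli⟩ := exists_linearIndependent ℝ F
  haveI : Fintype b := hbli.setFinite.fintype
  -- domination constants for the basis elements
  have hcex : ∀ i : b, 0 < (Classical.choose (hbF i.2).2) ∧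
      (Classical.choose (hbF i.2).2) • A₀ - (i : Matrix (Fin n) (Fin n) ℝ) ∈ J :=
    fun i => Classical.choose_spec (hbF i.2).2
  set cc : b → ℝ := fun i => Classical.choose (hbF i.2).2 with hccdef
  -- the span and a basis of it
  set V := Submodule.span ℝ F with hV
  have hVeq : Submodule.span ℝ (Set.range ((↑) : b → Matrix (Fin n) (Fin n) ℝ)) = V := by
    rw [Subtype.range_coe]; exact hbspan
  let bb : Module.Basis b ℝ V := (Module.Basis.span hbli).map (LinearEquiv.ofEq _ _ hVeq)
  have hbbi : ∀ i : b, ((bb i : V) : Matrix (Fin n) (Fin n) ℝ)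
      = (i : Matrix (Fin n) (Fin n) ℝ) := by
    intro i
    simp only [bb, Module.Basis.map_apply, LinearEquiv.coe_ofEq_apply]
    exact congrArg Subtype.val (Module.Basis.span_apply hbli i)
  -- globally defined coordinate functionals
  have hLex : ∀ i : b, ∃ g : Matrix (Fin n) (Fin n) ℝ →ₗ[ℝ] ℝ,
      g.comp V.subtype = bb.coord i := fun i => LinearMap.exists_extend _
  choose L hL using hLex
  have hLval : ∀ (i : b) (Δ : V), L i (Δ : Matrix (Fin n) (Fin n) ℝ) = bb.coord i Δ := by
    intro i Δ
    have := LinearMap.ext_iff.mp (hL i) Δ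
    simpa using this
  -- the controlling continuous function
  set Φ : Matrix (Fin n) (Fin n) ℝ → ℝ := fun X => ∑ i : b, cc i * |L i X| with hΦ
  have hΦcont : Continuous Φ := by
    refine continuous_finset_sum _ fun i _ => continuous_const.mul ?_
    exact (LinearMap.continuous_of_finiteDimensional (L i)).abs
  have hΦ0 : Φ 0 = 0 := by simp [hΦ]
  -- representation of elements of V
  have hrep : ∀ Δ : V, (Δ : Matrix (Fin n) (Fin n) ℝ)
      = ∑ i : b, (L i (Δ : Matrix (Fin n) (Fin n) ℝ)) • (i : Matrix (Fin n) (Fin n) ℝ) := by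
    intro Δ
    have h1 := bb.sum_repr Δ
    conv_lhs => rw [← h1]
    rw [AddSubmonoidClass.coe_finset_sum]
    refine Finset.sum_congr rfl fun i _ => ?_
    rw [SetLike.val_smul, hbbi i, hLval i Δ, Module.Basis.coord_apply]
  -- domination of elements of V by Φ
  have hdom : ∀ Δ : V, (Φ (Δ : Matrix (Fin n) (Fin n) ℝ)) • A₀ - (Δ : Matrix (Fin n) (Fin n) ℝ) ∈ J
      ∧ (Φ (Δ : Matrix (Fin n) (Fin n) ℝ)) • A₀ + (Δ : Matrix (Fin n) (Fin n) ℝ) ∈ J := by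
    intro Δ
    constructor
    · have h := opCone_sum hC Finset.univ
        (fun i : b => (cc i * |L i (Δ : Matrix (Fin n) (Fin n) ℝ)|) • A₀
          - (L i (Δ : Matrix (Fin n) (Fin n) ℝ)) • (i : Matrix (Fin n) (Fin n) ℝ)) ?_
      · have hsum_eq : (∑ i : b, ((cc i * |L i (Δ : Matrix (Fin n) (Fin n) ℝ)|) • A₀
            - (L i (Δ : Matrix (Fin n) (Fin n) ℝ)) • (i : Matrix (Fin n) (Fin n) ℝ)))
            = (Φ (Δ : Matrix (Fin n) (Fin n) ℝ)) • A₀ - (Δ : Matrix (Fin n) (Fin n) ℝ) := by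
          simp only [hΦ]
          rw [Finset.sum_sub_distrib, ← Finset.sum_smul, ← hrep Δ]
        rwa [hsum_eq] at h
      · intro i _
        rcases le_or_gt 0 (L i (Δ : Matrix (Fin n) (Fin n) ℝ)) with hpos | hneg
        · have heq2 : (cc i * |L i (Δ : Matrix (Fin n) (Fin n) ℝ)|) • A₀
              - (L i (Δ : Matrix (Fin n) (Fin n) ℝ)) • (i : Matrix (Fin n) (Fin n) ℝ)
              = (L i (Δ : Matrix (Fin n) (Fin n) ℝ))
                • ((cc i) • A₀ - (i : Matrix (Fin n) (Fin n) ℝ)) := by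
            rw [abs_of_nonneg hpos]; module
          beta_reduce
          rw [heq2]
          exact opCone_smul hC (hcex i).2 hpos
        · have heq2 : (cc i * |L i (Δ : Matrix (Fin n) (Fin n) ℝ)|) • A₀
              - (L i (Δ : Matrix (Fin n) (Fin n) ℝ)) • (i : Matrix (Fin n) (Fin n) ℝ)
              = (-(L i (Δ : Matrix (Fin n) (Fin n) ℝ))) • ((cc i) • A₀)
                + (-(L i (Δ : Matrix (Fin n) (Fin n) ℝ))) • (i : Matrix (Fin n) (Fin n) ℝ) := by
            rw [abs_of_neg hneg]; module
          beta_reduce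
          rw [heq2]
          exact opCone_add hC
            (opCone_smul hC (opCone_smul hC hA₀J (hcex i).1.le) (by linarith))
            (opCone_smul hC (hbF i.2).1 (by linarith))
    · have h := opCone_sum hC Finset.univ
        (fun i : b => (cc i * |L i (Δ : Matrix (Fin n) (Fin n) ℝ)|) • A₀
          + (L i (Δ : Matrix (Fin n) (Fin n) ℝ)) • (i : Matrix (Fin n) (Fin n) ℝ)) ?_
      · have hsum_eq : (∑ i : b, ((cc i * |L i (Δ : Matrix (Fin n) (Fin n) ℝ)|) • A₀
            + (L i (Δ : Matrix (Fin n) (Fin n) ℝ)) • (i : Matrix (Fin n) (Fin n) ℝ)))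
            = (Φ (Δ : Matrix (Fin n) (Fin n) ℝ)) • A₀ + (Δ : Matrix (Fin n) (Fin n) ℝ) := by
          simp only [hΦ]
          rw [Finset.sum_add_distrib, ← Finset.sum_smul, ← hrep Δ]
        rwa [hsum_eq] at h
      · intro i _
        rcases le_or_gt 0 (L i (Δ : Matrix (Fin n) (Fin n) ℝ)) with hpos | hneg
        · have heq2 : (cc i * |L i (Δ : Matrix (Fin n) (Fin n) ℝ)|) • A₀
              + (L i (Δ : Matrix (Fin n) (Fin n) ℝ)) • (i : Matrix (Fin n) (Fin n) ℝ)
              = (L i (Δ : Matrix (Fin n) (Fin n) ℝ)) • ((cc i) • A₀)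
                + (L i (Δ : Matrix (Fin n) (Fin n) ℝ)) • (i : Matrix (Fin n) (Fin n) ℝ) := by
            rw [abs_of_nonneg hpos]; module
          beta_reduce
          rw [heq2]
          exact opCone_add hC (opCone_smul hC (opCone_smul hC hA₀J (hcex i).1.le) hpos)
            (opCone_smul hC (hbF i.2).1 hpos)
        · have heq2 : (cc i * |L i (Δ : Matrix (Fin n) (Fin n) ℝ)|) • A₀
              + (L i (Δ : Matrix (Fin n) (Fin n) ℝ)) • (i : Matrix (Fin n) (Fin n) ℝ)
              = (-(L i (Δ : Matrix (Fin n) (Fin n) ℝ)))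
                • ((cc i) • A₀ - (i : Matrix (Fin n) (Fin n) ℝ)) := by
            rw [abs_of_neg hneg]; module
          beta_reduce
          rw [heq2]
          exact opCone_smul hC (hcex i).2 (by linarith)
  -- membership of K4 in V
  have hKV : ∀ M ∈ K4, M ∈ V := fun M hM => Submodule.subset_span (hKF M hM)
  -- lower bound via compactness
  have hsel : ∀ M, M ∈ K4 → ∃ μ : ℝ, 0 < μ ∧ M - μ • A₀ ∈ J :=
    fun M hM => comp_dn hC (hK4P M hM).2
  choose! μf hμf1 hμf2 using hsel
  set U : Matrix (Fin n) (Fin n) ℝ → Set (Matrix (Fin n) (Fin n) ℝ) :=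
    fun M₀ => {M | Φ (M - M₀) < μf M₀ / 2} with hU
  have hUnhds : ∀ M₀ ∈ K4, U M₀ ∈ nhds M₀ := by
    intro M₀ hM₀
    have hopen : IsOpen (U M₀) := by
      have : U M₀ = (fun M => Φ (M - M₀)) ⁻¹' (Iio (μf M₀ / 2)) := rfl
      rw [this]
      exact isOpen_Iio.preimage (hΦcont.comp (continuous_id.sub continuous_const))
    refine hopen.mem_nhds ?_
    show Φ (M₀ - M₀) < μf M₀ / 2
    rw [sub_self, hΦ0]
    have := hμf1 M₀ hM₀
    linarith
  obtain ⟨tf, htfK, htfcover⟩ := hK4c.elim_nhds_subcover U hUnhds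
  have htfne : tf.Nonempty := by
    rcases Finset.eq_empty_or_nonempty tf with h | h
    · exfalso
      obtain ⟨M, hM⟩ := hK4ne
      have := htfcover hM
      simp [h] at this
    · exact h
  set s : ℝ := tf.inf' htfne (fun M₀ => μf M₀ / 2) with hs
  have hspos : 0 < s := by
    rw [hs, Finset.lt_inf'_iff]
    intro M₀ hM₀
    have := hμf1 M₀ (htfK M₀ hM₀)
    linarith
  -- upper bound via compactness
  obtain ⟨M₀u, hM₀u⟩ := id hK4ne
  have hcont2 : Continuous fun M => Φ (M - M₀u) :=
    hΦcont.comp (continuous_id.sub continuous_const)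
  obtain ⟨Mx, hMx, hmax'⟩ := hK4c.exists_isMaxOn hK4ne hcont2.continuousOn
  have hmax : ∀ M ∈ K4, Φ (M - M₀u) ≤ Φ (Mx - M₀u) := fun M hM => hmax' hM
  set R : ℝ := Φ (Mx - M₀u) with hR
  have hR0 : 0 ≤ R := by
    have := hmax M₀u hM₀u
    rw [sub_self, hΦ0] at this
    exact this
  obtain ⟨l₀, hl₀, hl₀mem⟩ := comp_up hC (hK4P M₀u hM₀u).2
  refine ⟨s, l₀ + R, hspos, by linarith, ?_⟩
  intro M hM
  constructor
  · -- lower bound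
    have := htfcover hM
    rw [Set.mem_iUnion₂] at this
    obtain ⟨M₀, hM₀tf, hMU⟩ := this
    have hM₀K : M₀ ∈ K4 := htfK M₀ hM₀tf
    have hΔV : M - M₀ ∈ V := Submodule.sub_mem V (hKV M hM) (hKV M₀ hM₀K)
    set Δ : V := ⟨M - M₀, hΔV⟩ with hΔ
    have hδ : Φ (M - M₀) < μf M₀ / 2 := hMU
    have hsle : s ≤ μf M₀ / 2 := Finset.inf'_le _ hM₀tf
    have hsum : M - s • A₀ = (M₀ - μf M₀ • A₀)
        + ((Φ (M - M₀)) • A₀ + (M - M₀))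
        + (μf M₀ - Φ (M - M₀) - s) • A₀ := by
      module
    rw [hsum]
    refine opCone_add hC (opCone_add hC (hμf2 M₀ hM₀K) ?_) (opCone_smul hC hA₀J (by linarith))
    exact (hdom Δ).2
  · -- upper bound
    have hΔV : M - M₀u ∈ V := Submodule.sub_mem V (hKV M hM) (hKV M₀u hM₀u)
    set Δ : V := ⟨M - M₀u, hΔV⟩ with hΔ
    have hδ : Φ (M - M₀u) ≤ R := hmax M hM
    have hsum : (l₀ + R) • A₀ - M = (l₀ • A₀ - M₀u)
        + ((Φ (M - M₀u)) • A₀ - (M - M₀u))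
        + (R - Φ (M - M₀u)) • A₀ := by
      module
    rw [hsum]
    refine opCone_add hC (opCone_add hC hl₀mem ?_) (opCone_smul hC hA₀J (by linarith))
    exact (hdom Δ).1

end UniformComp
section MainCtx

/-- Context for the main (non-degenerate) case. -/
structure MainCtx {n : ℕ} (C : Set (Fin n → ℝ)) (xb : Fin n → ℝ) where
  hC : ConeHyp C
  hxb : xb ∈ interior C
  A₀ : Matrix (Fin n) (Fin n) ℝ
  hA₀ : A₀ ∈ EndInt C
  K4 : Set (Matrix (Fin n) (Fin n) ℝ)
  s : ℝ
  t : ℝ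
  hs : 0 < s
  ht : 0 < t
  hK4E : ∀ M ∈ K4, M ∈ EndInt C
  hK4cmp : ∀ M ∈ K4, opComparable C A₀ M
  hstK : ∀ M ∈ K4, M - s • A₀ ∈ opCone C ∧ t • A₀ - M ∈ opCone C

/-- A function which is nonexpansive for the Funk hemi-metric. -/
def LipFn {n : ℕ} (C : Set (Fin n → ℝ)) (w : (Fin n → ℝ) → ℝ) : Prop :=
  ∀ y ∈ interior C, ∀ z ∈ interior C, w y - w z ≤ gfk C y z

noncomputable def eplus {n : ℕ} (C : Set (Fin n → ℝ)) (xb : Fin n → ℝ)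
    (A₀ : Matrix (Fin n) (Fin n) ℝ) (x : Fin n → ℝ) : ℝ :=
  gfk C (Matrix.vecMul (Matrix.vecMul x A₀) A₀) xb

noncomputable def eminus {n : ℕ} (C : Set (Fin n → ℝ)) (xb : Fin n → ℝ)
    (A₀ : Matrix (Fin n) (Fin n) ℝ) (x : Fin n → ℝ) : ℝ :=
  gfk C xb (Matrix.vecMul (Matrix.vecMul x A₀) A₀)

variable {n : ℕ} {C : Set (Fin n → ℝ)} {xb : Fin n → ℝ} (ctx : MainCtx C xb)

lemma MainCtx.negK4 {M : Matrix (Fin n) (Fin n) ℝ} (hM : M ∈ ctx.K4) :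
    -M ∉ opCone C :=
  neg_notin_opCone ctx.hC ctx.hA₀ (ctx.hK4E M hM) (ctx.hK4cmp M hM)

lemma MainCtx.opne {M M' : Matrix (Fin n) (Fin n) ℝ} (hM : M ∈ ctx.K4) (hM' : M' ∈ ctx.K4) :
    (gSet (opCone C) M M').Nonempty :=
  gSet_op_nonempty ctx.hC (ctx.hK4cmp M hM) (ctx.hK4cmp M' hM')

lemma MainCtx.ts_mem {M M' : Matrix (Fin n) (Fin n) ℝ} (hM : M ∈ ctx.K4) (hM' : M' ∈ ctx.K4) :
    ctx.t / ctx.s ∈ gSet (opCone C) M M' := by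
  refine ⟨div_pos ctx.ht ctx.hs, ?_⟩
  have h := opCone_add ctx.hC
    (opCone_smul ctx.hC (ctx.hstK M' hM').1 (le_of_lt (div_pos ctx.ht ctx.hs)))
    (ctx.hstK M hM).2
  have heq : (ctx.t / ctx.s) • (M' - ctx.s • A₀ ctx) + (ctx.t • A₀ ctx - M)
      = (ctx.t / ctx.s) • M' - M := by
    rw [smul_sub, smul_smul, div_mul_cancel₀ _ (ne_of_gt ctx.hs)]
    abel
  rwa [heq] at h

lemma MainCtx.t_mem {M : Matrix (Fin n) (Fin n) ℝ} (hM : M ∈ ctx.K4) :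
    ctx.t ∈ gSet (opCone C) M ctx.A₀ :=
  ⟨ctx.ht, (ctx.hstK M hM).2⟩

lemma MainCtx.s_mem {M : Matrix (Fin n) (Fin n) ℝ} (hM : M ∈ ctx.K4) :
    1 / ctx.s ∈ gSet (opCone C) ctx.A₀ M := by
  have hspos := ctx.hs
  refine ⟨by positivity, ?_⟩
  have h := opCone_smul ctx.hC (ctx.hstK M hM).1 (le_of_lt (by positivity : (0:ℝ) < 1 / ctx.s))
  have heq : (1 / ctx.s) • (M - ctx.s • ctx.A₀) = (1 / ctx.s) • M - ctx.A₀ := by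
    rw [smul_sub, smul_smul, one_div, inv_mul_cancel₀ (ne_of_gt ctx.hs), one_smul]
  rwa [heq] at h

lemma MainCtx.opT_le {M M' : Matrix (Fin n) (Fin n) ℝ} (hM : M ∈ ctx.K4) (hM' : M' ∈ ctx.K4) :
    opThompson C M M' ≤ Real.log (ctx.t / ctx.s) := by
  have key : ∀ N N', N ∈ ctx.K4 → N' ∈ ctx.K4 → opFunk C N N' ≤ Real.log (ctx.t / ctx.s) := by
    intro N N' hN hN'
    rw [opFunk_eq_gfk ctx.hC]
    refine gfk_le_log (ctx.ts_mem hN hN') ?_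
    exact gSet_sInf_pos (fun a ha b hb => opCone_add ctx.hC ha hb)
      (fun a ha r hr => opCone_smul ctx.hC ha hr) (ctx.negK4 hN)
      (ctx.opne hN hN') (ctx.opne hN' hN)
  exact max_le (key M M' hM hM') (key M' M hM' hM)

lemma MainCtx.opT_nonneg {M M' : Matrix (Fin n) (Fin n) ℝ} (hM : M ∈ ctx.K4)
    (hM' : M' ∈ ctx.K4) : 0 ≤ opThompson C M M' := by
  have h := gfk_pair_nonneg (fun a ha b hb => opCone_add ctx.hC ha hb)
    (fun a ha r hr => opCone_smul ctx.hC ha hr) (ctx.negK4 hM)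
    (ctx.opne hM hM') (ctx.opne hM' hM)
  have h1 : gfk (opCone C) M M' ≤ opThompson C M M' := by
    rw [opThompson, opFunk_eq_gfk ctx.hC, opFunk_eq_gfk ctx.hC]; exact le_max_left _ _
  have h2 : gfk (opCone C) M' M ≤ opThompson C M M' := by
    rw [opThompson, opFunk_eq_gfk ctx.hC, opFunk_eq_gfk ctx.hC]; exact le_max_right _ _
  linarith

lemma MainCtx.funk_le_opT {x : Fin n → ℝ} (hx : x ∈ interior C)
    {M M' : Matrix (Fin n) (Fin n) ℝ} (hM : M ∈ ctx.K4) (hM' : M' ∈ ctx.K4) :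
    gfk C (Matrix.vecMul x M) (Matrix.vecMul x M') ≤ opThompson C M M' := by
  have h := funk_op_push ctx.hC hx (ctx.hK4E M hM) (ctx.hK4E M' hM')
    (ctx.negK4 hM) (ctx.opne hM hM')
  refine h.trans ?_
  rw [opThompson, opFunk_eq_gfk ctx.hC, opFunk_eq_gfk ctx.hC]
  exact le_max_left _ _

lemma MainCtx.int_MN {x : Fin n → ℝ} (hx : x ∈ interior C)
    {M N : Matrix (Fin n) (Fin n) ℝ} (hM : M ∈ ctx.K4) (hN : N ∈ ctx.K4) :
    Matrix.vecMul (Matrix.vecMul x M) N ∈ interior C :=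
  ctx.hK4E N hN _ (ctx.hK4E M hM x hx)

lemma MainCtx.int_A₀A₀ {x : Fin n → ℝ} (hx : x ∈ interior C) :
    Matrix.vecMul (Matrix.vecMul x ctx.A₀) ctx.A₀ ∈ interior C :=
  ctx.hA₀ _ (ctx.hA₀ x hx)

/-- Upper bound on the Funk distance from an orbit point to `xb`. -/
lemma MainCtx.funk_orbit_ub {x : Fin n → ℝ} (hx : x ∈ interior C)
    {M N : Matrix (Fin n) (Fin n) ℝ} (hM : M ∈ ctx.K4) (hN : N ∈ ctx.K4) :
    gfk C (Matrix.vecMul (Matrix.vecMul x M) N) xb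
      ≤ 2 * Real.log ctx.t + eplus C xb ctx.A₀ x := by
  have hxM := ctx.hK4E M hM x hx
  have hxA := ctx.hA₀ x hx
  have hMN := ctx.int_MN hx hM hN
  have hAN : Matrix.vecMul (Matrix.vecMul x ctx.A₀) N ∈ interior C := ctx.hK4E N hN _ hxA
  have hAA := ctx.int_A₀A₀ hx
  have t1 : gfk C (Matrix.vecMul (Matrix.vecMul x M) N) xb
      ≤ gfk C (Matrix.vecMul (Matrix.vecMul x M) N) (Matrix.vecMul (Matrix.vecMul x ctx.A₀) ctx.A₀)
        + eplus C xb ctx.A₀ x :=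
    funkC_tri ctx.hC hMN hAA ctx.hxb
  have t2 : gfk C (Matrix.vecMul (Matrix.vecMul x M) N)
      (Matrix.vecMul (Matrix.vecMul x ctx.A₀) ctx.A₀)
      ≤ gfk C (Matrix.vecMul (Matrix.vecMul x M) N) (Matrix.vecMul (Matrix.vecMul x ctx.A₀) N)
        + gfk C (Matrix.vecMul (Matrix.vecMul x ctx.A₀) N)
          (Matrix.vecMul (Matrix.vecMul x ctx.A₀) ctx.A₀) :=
    funkC_tri ctx.hC hMN hAN hAA
  have t3 : gfk C (Matrix.vecMul (Matrix.vecMul x M) N) (Matrix.vecMul (Matrix.vecMul x ctx.A₀) N)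
      ≤ Real.log ctx.t := by
    refine (funkC_vecMul_le ctx.hC hxM hxA (ctx.hK4E N hN)).trans ?_
    exact funkC_le_log ctx.hC hxM hxA (funk_mem_push ctx.hC hx (ctx.t_mem hM))
  have t4 : gfk C (Matrix.vecMul (Matrix.vecMul x ctx.A₀) N)
      (Matrix.vecMul (Matrix.vecMul x ctx.A₀) ctx.A₀) ≤ Real.log ctx.t :=
    funkC_le_log ctx.hC hAN hAA (funk_mem_push ctx.hC hxA (ctx.t_mem hN))
  linarith

/-- Upper bound on the Funk distance from `xb` to an orbit point. -/
lemma MainCtx.funk_orbit_lb {x : Fin n → ℝ} (hx : x ∈ interior C)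
    {M N : Matrix (Fin n) (Fin n) ℝ} (hM : M ∈ ctx.K4) (hN : N ∈ ctx.K4) :
    gfk C xb (Matrix.vecMul (Matrix.vecMul x M) N)
      ≤ eminus C xb ctx.A₀ x + 2 * Real.log (1 / ctx.s) := by
  have hxM := ctx.hK4E M hM x hx
  have hxA := ctx.hA₀ x hx
  have hMN := ctx.int_MN hx hM hN
  have hAN : Matrix.vecMul (Matrix.vecMul x ctx.A₀) N ∈ interior C := ctx.hK4E N hN _ hxA
  have hAA := ctx.int_A₀A₀ hx
  have t1 : gfk C xb (Matrix.vecMul (Matrix.vecMul x M) N)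
      ≤ eminus C xb ctx.A₀ x
        + gfk C (Matrix.vecMul (Matrix.vecMul x ctx.A₀) ctx.A₀)
          (Matrix.vecMul (Matrix.vecMul x M) N) :=
    funkC_tri ctx.hC ctx.hxb hAA hMN
  have t2 : gfk C (Matrix.vecMul (Matrix.vecMul x ctx.A₀) ctx.A₀)
      (Matrix.vecMul (Matrix.vecMul x M) N)
      ≤ gfk C (Matrix.vecMul (Matrix.vecMul x ctx.A₀) ctx.A₀)
          (Matrix.vecMul (Matrix.vecMul x ctx.A₀) N)
        + gfk C (Matrix.vecMul (Matrix.vecMul x ctx.A₀) N)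
          (Matrix.vecMul (Matrix.vecMul x M) N) :=
    funkC_tri ctx.hC hAA hAN hMN
  have t3 : gfk C (Matrix.vecMul (Matrix.vecMul x ctx.A₀) ctx.A₀)
      (Matrix.vecMul (Matrix.vecMul x ctx.A₀) N) ≤ Real.log (1 / ctx.s) :=
    funkC_le_log ctx.hC hAA hAN (funk_mem_push ctx.hC hxA (ctx.s_mem hN))
  have t4 : gfk C (Matrix.vecMul (Matrix.vecMul x ctx.A₀) N)
      (Matrix.vecMul (Matrix.vecMul x M) N) ≤ Real.log (1 / ctx.s) := by
    refine (funkC_vecMul_le ctx.hC hxA hxM (ctx.hK4E N hN)).trans ?_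
    exact funkC_le_log ctx.hC hxA hxM (funk_mem_push ctx.hC hx (ctx.s_mem hM))
  linarith

/-- Pointwise bounds for a Funk-nonexpansive function on orbit points. -/
lemma MainCtx.orbit_bdd {w : (Fin n → ℝ) → ℝ} (hw : LipFn C w)
    {x : Fin n → ℝ} (hx : x ∈ interior C)
    {M N : Matrix (Fin n) (Fin n) ℝ} (hM : M ∈ ctx.K4) (hN : N ∈ ctx.K4) :
    w xb - (eminus C xb ctx.A₀ x + 2 * Real.log (1 / ctx.s))
      ≤ w (Matrix.vecMul (Matrix.vecMul x M) N)
    ∧ w (Matrix.vecMul (Matrix.vecMul x M) N)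
      ≤ w xb + (2 * Real.log ctx.t + eplus C xb ctx.A₀ x) := by
  have hMN := ctx.int_MN hx hM hN
  constructor
  · have h := hw xb ctx.hxb _ hMN
    have h2 := ctx.funk_orbit_lb hx hM hN
    linarith
  · have h := hw _ hMN xb ctx.hxb
    have h2 := ctx.funk_orbit_ub hx hM hN
    linarith

end MainCtx
section StepLemmas

noncomputable def supPay {n : ℕ} (Y : Set (Matrix (Fin n) (Fin n) ℝ)) (w : (Fin n → ℝ) → ℝ)
    (x : Fin n → ℝ) (M : Matrix (Fin n) (Fin n) ℝ) : ℝ :=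
  ⨆ N : Y, w (Matrix.vecMul (Matrix.vecMul x M) (N : Matrix (Fin n) (Fin n) ℝ))

lemma mshapley_eq {n : ℕ} (X Y : Set (Matrix (Fin n) (Fin n) ℝ)) (w : (Fin n → ℝ) → ℝ)
    (x : Fin n → ℝ) :
    mshapley X Y w x = ⨅ M : X, supPay Y w x (M : Matrix (Fin n) (Fin n) ℝ) := rfl

lemma opThompson_comm {n : ℕ} (C : Set (Fin n → ℝ)) (M M' : Matrix (Fin n) (Fin n) ℝ) :
    opThompson C M M' = opThompson C M' M := max_comm _ _

lemma hausT_comm {n : ℕ} (C : Set (Fin n → ℝ)) (X Y : Set (Matrix (Fin n) (Fin n) ℝ)) :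
    hausT C X Y = hausT C Y X := by
  rw [hausT, hausT, max_comm]
  congr 1
  · exact iSup_congr fun M' => iInf_congr fun M => opThompson_comm C _ _
  · exact iSup_congr fun M => iInf_congr fun M' => opThompson_comm C _ _

variable {n : ℕ} {C : Set (Fin n → ℝ)} {xb : Fin n → ℝ} (ctx : MainCtx C xb)

lemma MainCtx.sel {X Y : Set (Matrix (Fin n) (Fin n) ℝ)}
    (hX : X ⊆ ctx.K4) (hY : Y ⊆ ctx.K4) (hXne : X.Nonempty) (hYne : Y.Nonempty)
    {M₀ : Matrix (Fin n) (Fin n) ℝ} (hM₀ : M₀ ∈ X) {ε : ℝ} (hε : 0 < ε) :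
    ∃ M' ∈ Y, opThompson C M₀ M' < hausT C X Y + ε := by
  haveI := hXne.to_subtype
  haveI := hYne.to_subtype
  have hbddb : ∀ M : X, BddBelow (range fun M' : Y =>
      opThompson C (M : Matrix (Fin n) (Fin n) ℝ) (M' : Matrix (Fin n) (Fin n) ℝ)) :=
    fun M => ⟨0, by rintro val ⟨M', rfl⟩; exact ctx.opT_nonneg (hX M.2) (hY M'.2)⟩
  have h1 : (⨅ M' : Y, opThompson C M₀ (M' : Matrix (Fin n) (Fin n) ℝ)) ≤ hausT C X Y := by
    have hbdda : BddAbove (range fun M : X =>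
        ⨅ M' : Y, opThompson C (M : Matrix (Fin n) (Fin n) ℝ) (M' : Matrix (Fin n) (Fin n) ℝ)) := by
      refine ⟨Real.log (ctx.t / ctx.s), ?_⟩
      rintro val ⟨M, rfl⟩
      obtain ⟨N₀, hN₀⟩ := hYne
      exact (ciInf_le (hbddb M) ⟨N₀, hN₀⟩).trans (ctx.opT_le (hX M.2) (hY hN₀))
    have h2 := le_ciSup hbdda (⟨M₀, hM₀⟩ : X)
    exact h2.trans (le_max_left _ _)
  have h3 : (⨅ M' : Y, opThompson C M₀ (M' : Matrix (Fin n) (Fin n) ℝ)) < hausT C X Y + ε :=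
    lt_of_le_of_lt h1 (lt_add_of_pos_right _ hε)
  obtain ⟨M', hM'⟩ := exists_lt_of_ciInf_lt h3
  exact ⟨M', M'.2, hM'⟩

lemma MainCtx.supPay_ub {Y : Set (Matrix (Fin n) (Fin n) ℝ)}
    (hY : Y ⊆ ctx.K4) (hYne : Y.Nonempty)
    {w : (Fin n → ℝ) → ℝ} (hw : LipFn C w) {x : Fin n → ℝ} (hx : x ∈ interior C)
    {M : Matrix (Fin n) (Fin n) ℝ} (hM : M ∈ ctx.K4) :
    supPay Y w x M ≤ w xb + (2 * Real.log ctx.t + eplus C xb ctx.A₀ x) := by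
  haveI := hYne.to_subtype
  exact ciSup_le fun N => (ctx.orbit_bdd hw hx hM (hY N.2)).2

lemma MainCtx.supPay_bddAbove {Y : Set (Matrix (Fin n) (Fin n) ℝ)}
    (hY : Y ⊆ ctx.K4)
    {w : (Fin n → ℝ) → ℝ} (hw : LipFn C w) {x : Fin n → ℝ} (hx : x ∈ interior C)
    {M : Matrix (Fin n) (Fin n) ℝ} (hM : M ∈ ctx.K4) :
    BddAbove (range fun N : Y =>
      w (Matrix.vecMul (Matrix.vecMul x M) (N : Matrix (Fin n) (Fin n) ℝ))) := by
  refine ⟨w xb + (2 * Real.log ctx.t + eplus C xb ctx.A₀ x), ?_⟩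
  rintro val ⟨N, rfl⟩
  exact (ctx.orbit_bdd hw hx hM (hY N.2)).2

lemma MainCtx.supPay_lb {Y : Set (Matrix (Fin n) (Fin n) ℝ)}
    (hY : Y ⊆ ctx.K4) (hYne : Y.Nonempty)
    {w : (Fin n → ℝ) → ℝ} (hw : LipFn C w) {x : Fin n → ℝ} (hx : x ∈ interior C)
    {M : Matrix (Fin n) (Fin n) ℝ} (hM : M ∈ ctx.K4) :
    w xb - (eminus C xb ctx.A₀ x + 2 * Real.log (1 / ctx.s)) ≤ supPay Y w x M := by
  haveI := hYne.to_subtype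
  obtain ⟨N₀, hN₀⟩ := hYne
  calc w xb - (eminus C xb ctx.A₀ x + 2 * Real.log (1 / ctx.s))
      ≤ w (Matrix.vecMul (Matrix.vecMul x M) N₀) := (ctx.orbit_bdd hw hx hM (hY hN₀)).1
    _ ≤ supPay Y w x M := le_ciSup (ctx.supPay_bddAbove hY hw hx hM) ⟨N₀, hN₀⟩

lemma MainCtx.mshapley_bddBelow {X Y : Set (Matrix (Fin n) (Fin n) ℝ)}
    (hX : X ⊆ ctx.K4) (hY : Y ⊆ ctx.K4) (hYne : Y.Nonempty)
    {w : (Fin n → ℝ) → ℝ} (hw : LipFn C w) {x : Fin n → ℝ} (hx : x ∈ interior C) :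
    BddBelow (range fun M : X => supPay Y w x (M : Matrix (Fin n) (Fin n) ℝ)) := by
  refine ⟨w xb - (eminus C xb ctx.A₀ x + 2 * Real.log (1 / ctx.s)), ?_⟩
  rintro val ⟨M, rfl⟩
  exact ctx.supPay_lb hY hYne hw hx (hX M.2)

/-- The one-step comparison estimate for the Shapley operators. -/
lemma MainCtx.step {X Y X' Y' : Set (Matrix (Fin n) (Fin n) ℝ)}
    (hX : X ⊆ ctx.K4) (hY : Y ⊆ ctx.K4) (hX' : X' ⊆ ctx.K4) (hY' : Y' ⊆ ctx.K4)
    (hXne : X.Nonempty) (hYne : Y.Nonempty) (hX'ne : X'.Nonempty) (hY'ne : Y'.Nonempty)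
    {w w' : (Fin n → ℝ) → ℝ} (hw : LipFn C w) (hw' : LipFn C w')
    {c : ℝ} (hc : ∀ y ∈ interior C, w y - w' y ≤ c)
    {x : Fin n → ℝ} (hx : x ∈ interior C) :
    mshapley X Y w x ≤ mshapley X' Y' w' x + (c + hausT C X X' + hausT C Y Y') := by
  haveI := hXne.to_subtype
  haveI := hYne.to_subtype
  haveI := hX'ne.to_subtype
  haveI := hY'ne.to_subtype
  refine le_of_forall_pos_le_add fun ε hε => ?_
  rw [mshapley_eq, mshapley_eq]
  have hε3 : 0 < ε / 3 := by positivity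
  -- pick a near-optimal M'ε for the primed game
  have hlt : (⨅ M' : X', supPay Y' w' x (M' : Matrix (Fin n) (Fin n) ℝ))
      < (⨅ M' : X', supPay Y' w' x (M' : Matrix (Fin n) (Fin n) ℝ)) + ε / 3 :=
    lt_add_of_pos_right _ hε3
  obtain ⟨M'ε, hM'εlt⟩ := exists_lt_of_ciInf_lt hlt
  -- select Mε ∈ X close to M'ε
  obtain ⟨Mε, hMεX, hMεlt⟩ := ctx.sel hX' hX hX'ne hXne M'ε.2 hε3
  have hMεK : Mε ∈ ctx.K4 := hX hMεX
  have hM'εK : (M'ε : Matrix (Fin n) (Fin n) ℝ) ∈ ctx.K4 := hX' M'ε.2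
  have hMM' : opThompson C Mε (M'ε : Matrix (Fin n) (Fin n) ℝ) < hausT C X X' + ε / 3 := by
    rw [opThompson_comm]
    rw [hausT_comm C X' X] at hMεlt
    exact hMεlt
  -- main estimate on the sup over Y
  have hGle : supPay Y w x Mε ≤ supPay Y' w' x (M'ε : Matrix (Fin n) (Fin n) ℝ)
      + (c + (hausT C X X' + ε / 3) + (hausT C Y Y' + ε / 3)) := by
    refine ciSup_le fun N => ?_
    have hNK : (N : Matrix (Fin n) (Fin n) ℝ) ∈ ctx.K4 := hY N.2
    obtain ⟨N', hN'Y', hNN'⟩ := ctx.sel hY hY' hYne hY'ne N.2 hε3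
    have hN'K : N' ∈ ctx.K4 := hY' hN'Y'
    have hxM'ε : Matrix.vecMul x (M'ε : Matrix (Fin n) (Fin n) ℝ) ∈ interior C :=
      ctx.hK4E _ hM'εK x hx
    have hi1 := ctx.int_MN hx hMεK hNK
    have hi2 : Matrix.vecMul (Matrix.vecMul x (M'ε : Matrix (Fin n) (Fin n) ℝ))
        (N : Matrix (Fin n) (Fin n) ℝ) ∈ interior C := ctx.hK4E _ hNK _ hxM'ε
    have hi3 : Matrix.vecMul (Matrix.vecMul x (M'ε : Matrix (Fin n) (Fin n) ℝ)) N'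
        ∈ interior C := ctx.hK4E _ hN'K _ hxM'ε
    have hp1 := hw _ hi1 _ hi3
    have htr := funkC_tri ctx.hC hi1 hi2 hi3
    have hpa : gfk C (Matrix.vecMul (Matrix.vecMul x Mε) (N : Matrix (Fin n) (Fin n) ℝ))
        (Matrix.vecMul (Matrix.vecMul x (M'ε : Matrix (Fin n) (Fin n) ℝ))
          (N : Matrix (Fin n) (Fin n) ℝ))
        ≤ opThompson C Mε (M'ε : Matrix (Fin n) (Fin n) ℝ) := by
      refine (funkC_vecMul_le ctx.hC (ctx.hK4E _ hMεK x hx) hxM'ε (ctx.hK4E _ hNK)).trans ?_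
      exact ctx.funk_le_opT hx hMεK hM'εK
    have hpb : gfk C (Matrix.vecMul (Matrix.vecMul x (M'ε : Matrix (Fin n) (Fin n) ℝ))
          (N : Matrix (Fin n) (Fin n) ℝ))
        (Matrix.vecMul (Matrix.vecMul x (M'ε : Matrix (Fin n) (Fin n) ℝ)) N')
        ≤ opThompson C (N : Matrix (Fin n) (Fin n) ℝ) N' :=
      ctx.funk_le_opT hxM'ε hNK hN'K
    have hpc : w' (Matrix.vecMul (Matrix.vecMul x (M'ε : Matrix (Fin n) (Fin n) ℝ)) N')
        ≤ supPay Y' w' x (M'ε : Matrix (Fin n) (Fin n) ℝ) :=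
      le_ciSup (ctx.supPay_bddAbove hY' hw' hx hM'εK) ⟨N', hN'Y'⟩
    have hpd := hc _ hi3
    linarith
  -- conclude
  have hfin1 : (⨅ M : X, supPay Y w x (M : Matrix (Fin n) (Fin n) ℝ)) ≤ supPay Y w x Mε :=
    ciInf_le (ctx.mshapley_bddBelow hX hY hYne hw hx) ⟨Mε, hMεX⟩
  have : supPay Y' w' x (M'ε : Matrix (Fin n) (Fin n) ℝ)
      < (⨅ M' : X', supPay Y' w' x (M' : Matrix (Fin n) (Fin n) ℝ)) + ε / 3 := hM'εlt
  linarith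

/-- The Shapley operator preserves Funk-nonexpansiveness. -/
lemma MainCtx.lip_pres {X Y : Set (Matrix (Fin n) (Fin n) ℝ)}
    (hX : X ⊆ ctx.K4) (hY : Y ⊆ ctx.K4) (hXne : X.Nonempty) (hYne : Y.Nonempty)
    {w : (Fin n → ℝ) → ℝ} (hw : LipFn C w) : LipFn C (mshapley X Y w) := by
  intro y hy z hz
  haveI := hXne.to_subtype
  haveI := hYne.to_subtype
  rw [mshapley_eq, mshapley_eq]
  have h1 : ∀ M : X, supPay Y w y (M : Matrix (Fin n) (Fin n) ℝ)
      ≤ supPay Y w z (M : Matrix (Fin n) (Fin n) ℝ) + gfk C y z := by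
    intro M
    have hMK : (M : Matrix (Fin n) (Fin n) ℝ) ∈ ctx.K4 := hX M.2
    refine ciSup_le fun N => ?_
    have hNK : (N : Matrix (Fin n) (Fin n) ℝ) ∈ ctx.K4 := hY N.2
    have ha := hw _ (ctx.int_MN hy hMK hNK) _ (ctx.int_MN hz hMK hNK)
    have hb : gfk C (Matrix.vecMul (Matrix.vecMul y (M : Matrix (Fin n) (Fin n) ℝ))
          (N : Matrix (Fin n) (Fin n) ℝ))
        (Matrix.vecMul (Matrix.vecMul z (M : Matrix (Fin n) (Fin n) ℝ))
          (N : Matrix (Fin n) (Fin n) ℝ))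
        ≤ gfk C (Matrix.vecMul y (M : Matrix (Fin n) (Fin n) ℝ))
          (Matrix.vecMul z (M : Matrix (Fin n) (Fin n) ℝ)) :=
      funkC_vecMul_le ctx.hC (ctx.hK4E _ hMK y hy) (ctx.hK4E _ hMK z hz) (ctx.hK4E _ hNK)
    have hc2 : gfk C (Matrix.vecMul y (M : Matrix (Fin n) (Fin n) ℝ))
        (Matrix.vecMul z (M : Matrix (Fin n) (Fin n) ℝ)) ≤ gfk C y z :=
      funkC_vecMul_le ctx.hC hy hz (ctx.hK4E _ hMK)
    have hd : w (Matrix.vecMul (Matrix.vecMul z (M : Matrix (Fin n) (Fin n) ℝ))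
          (N : Matrix (Fin n) (Fin n) ℝ))
        ≤ supPay Y w z (M : Matrix (Fin n) (Fin n) ℝ) :=
      le_ciSup (ctx.supPay_bddAbove hY hw hz hMK) N
    linarith
  have h2 : (⨅ M : X, supPay Y w y (M : Matrix (Fin n) (Fin n) ℝ)) - gfk C y z
      ≤ ⨅ M : X, supPay Y w z (M : Matrix (Fin n) (Fin n) ℝ) := by
    refine le_ciInf fun M => ?_
    have h3 := ciInf_le (ctx.mshapley_bddBelow hX hY hYne hw hy) M
    linarith [h1 M]
  linarith

/-- The base function is Funk-nonexpansive. -/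
lemma lip_base (hC : ConeHyp C) (hxb : xb ∈ interior C) : LipFn C (fun y => funk C y xb) := by
  intro y hy z hz
  have h := funkC_tri hC hy hz hxb
  show funk C y xb - funk C z xb ≤ gfk C y z
  have he : ∀ u : Fin n → ℝ, funk C u xb = gfk C u xb := fun u => rfl
  rw [he, he]
  linarith

end StepLemmas
section Iterate

variable {n : ℕ} {C : Set (Fin n → ℝ)} {xb : Fin n → ℝ} (ctx : MainCtx C xb)

lemma MainCtx.iter {X Y X' Y' : Set (Matrix (Fin n) (Fin n) ℝ)}
    (hX : X ⊆ ctx.K4) (hY : Y ⊆ ctx.K4) (hX' : X' ⊆ ctx.K4) (hY' : Y' ⊆ ctx.K4)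
    (hXne : X.Nonempty) (hYne : Y.Nonempty) (hX'ne : X'.Nonempty) (hY'ne : Y'.Nonempty) :
    ∀ k : ℕ, LipFn C ((mshapley X Y)^[k] (fun y => funk C y xb))
      ∧ LipFn C ((mshapley X' Y')^[k] (fun y => funk C y xb))
      ∧ ∀ y ∈ interior C, |(mshapley X Y)^[k] (fun y => funk C y xb) y
          - (mshapley X' Y')^[k] (fun y => funk C y xb) y|
          ≤ (k : ℝ) * (hausT C X X' + hausT C Y Y') := by
  intro k
  induction k with
  | zero =>
    refine ⟨by simpa using lip_base ctx.hC ctx.hxb, by simpa using lip_base ctx.hC ctx.hxb, ?_⟩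
    intro y hy
    simp
  | succ k ih =>
    obtain ⟨ihL, ihL', ihD⟩ := ih
    have hLk1 : LipFn C ((mshapley X Y)^[k+1] (fun y => funk C y xb)) := by
      rw [Function.iterate_succ_apply']
      exact ctx.lip_pres hX hY hXne hYne ihL
    have hLk1' : LipFn C ((mshapley X' Y')^[k+1] (fun y => funk C y xb)) := by
      rw [Function.iterate_succ_apply']
      exact ctx.lip_pres hX' hY' hX'ne hY'ne ihL'
    refine ⟨hLk1, hLk1', ?_⟩
    intro y hy
    rw [Function.iterate_succ_apply', Function.iterate_succ_apply']
    have h1 := ctx.step hX hY hX' hY' hXne hYne hX'ne hY'ne ihL ihL'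
      (c := (k : ℝ) * (hausT C X X' + hausT C Y Y'))
      (fun z hz => (abs_le.1 (ihD z hz)).2) hy
    have h2 := ctx.step hX' hY' hX hY hX'ne hY'ne hXne hYne ihL' ihL
      (c := (k : ℝ) * (hausT C X X' + hausT C Y Y'))
      (fun z hz => by have := (abs_le.1 (ihD z hz)).1; linarith) hy
    rw [hausT_comm C X' X, hausT_comm C Y' Y] at h2
    have hcast : ((k + 1 : ℕ) : ℝ) * (hausT C X X' + hausT C Y Y')
        = (k : ℝ) * (hausT C X X' + hausT C Y Y') + (hausT C X X' + hausT C Y Y') := by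
      push_cast; ring
    rw [abs_sub_le_iff, hcast]
    constructor <;> linarith

lemma main_case {P : Set (Matrix (Fin n) (Fin n) ℝ)}
    (hC : ConeHyp C) (hP : IsOpPart C P)
    {A A' B B' : Set (Matrix (Fin n) (Fin n) ℝ)}
    (hAP : A ⊆ P) (hA'P : A' ⊆ P) (hBP : B ⊆ P) (hB'P : B' ⊆ P)
    (hAc : IsCompact A) (hAne : A.Nonempty) (hA'c : IsCompact A') (hA'ne : A'.Nonempty)
    (hBc : IsCompact B) (hBne : B.Nonempty) (hB'c : IsCompact B') (hB'ne : B'.Nonempty)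
    {xb : Fin n → ℝ} (hxb : xb ∈ interior C) {ρ ρ' : ℝ}
    (hρ : Tendsto (fun k : ℕ => (mshapley A B)^[k] (fun y => funk C y xb) xb / (k : ℝ))
      atTop (nhds ρ))
    (hρ' : Tendsto (fun k : ℕ => (mshapley A' B')^[k] (fun y => funk C y xb) xb / (k : ℝ))
      atTop (nhds ρ')) :
    |ρ - ρ'| ≤ hausT C A A' + hausT C B B' := by
  obtain ⟨A₀, hA₀, hPdef⟩ := hP
  set K4 : Set (Matrix (Fin n) (Fin n) ℝ) := A ∪ A' ∪ B ∪ B' with hK4def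
  have hA4 : A ⊆ K4 := by intro M hM; left; left; left; exact hM
  have hA'4 : A' ⊆ K4 := by intro M hM; left; left; right; exact hM
  have hB4 : B ⊆ K4 := by intro M hM; left; right; exact hM
  have hB'4 : B' ⊆ K4 := by intro M hM; right; exact hM
  have hK4c : IsCompact K4 := ((hAc.union hA'c).union hBc).union hB'c
  have hK4ne : K4.Nonempty := hAne.mono hA4
  have hK4P : ∀ M ∈ K4, M ∈ EndInt C ∧ opComparable C A₀ M := by
    intro M hM
    have hMP : M ∈ P := by
      rcases hM with ((h | h) | h) | h
      · exact hAP h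
      · exact hA'P h
      · exact hBP h
      · exact hB'P h
    rw [hPdef] at hMP
    exact ⟨hMP.1, hMP.2⟩
  obtain ⟨s, t, hs, ht, hstK⟩ := uniform_comp hC hA₀ hK4c hK4ne hK4P
  let ctx : MainCtx C xb :=
    ⟨hC, hxb, A₀, hA₀, K4, s, t, hs, ht,
      fun M hM => (hK4P M hM).1, fun M hM => (hK4P M hM).2, hstK⟩
  have hiter := ctx.iter hA4 hB4 hA'4 hB'4 hAne hBne hA'ne hB'ne
  have hseq : ∀ k : ℕ, 1 ≤ k →
      |(mshapley A B)^[k] (fun y => funk C y xb) xb / (k : ℝ)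
        - (mshapley A' B')^[k] (fun y => funk C y xb) xb / (k : ℝ)|
      ≤ hausT C A A' + hausT C B B' := by
    intro k hk
    have h := (hiter k).2.2 xb hxb
    have hkpos : (0:ℝ) < (k : ℝ) := by exact_mod_cast hk
    rw [div_sub_div_same, abs_div, abs_of_pos hkpos]
    rw [div_le_iff₀ hkpos]
    calc |(mshapley A B)^[k] (fun y => funk C y xb) xb
        - (mshapley A' B')^[k] (fun y => funk C y xb) xb|
        ≤ (k : ℝ) * (hausT C A A' + hausT C B B') := h
      _ = (hausT C A A' + hausT C B B') * (k : ℝ) := mul_comm _ _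
  have hlim := (hρ.sub hρ').abs
  refine le_of_tendsto hlim ?_
  rw [eventually_atTop]
  exact ⟨1, hseq⟩

end Iterate
section Degenerate

variable {n : ℕ} {C : Set (Fin n → ℝ)}

lemma degenerate_univ (hCcone : ∀ x ∈ C, ∀ r : ℝ, 0 ≤ r → r • x ∈ C)
    (h0 : (0 : Fin n → ℝ) ∈ interior C) : C = univ := by
  ext z
  simp only [mem_univ, iff_true]
  rcases eq_or_ne z 0 with rfl | hz
  · exact interior_subset h0
  · obtain ⟨ε, hε, hball⟩ := Metric.isOpen_iff.1 isOpen_interior 0 h0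
    have hznorm : (0:ℝ) < ‖z‖ := norm_pos_iff.2 hz
    have hmem : (ε / 2 / ‖z‖) • z ∈ Metric.ball (0 : Fin n → ℝ) ε := by
      rw [mem_ball_zero_iff, norm_smul]
      rw [Real.norm_eq_abs, abs_of_pos (by positivity)]
      rw [div_mul_cancel₀ _ (ne_of_gt hznorm)]
      linarith
    have h1 : (ε / 2 / ‖z‖) • z ∈ C := interior_subset (hball hmem)
    have h2 := hCcone _ h1 (‖z‖ / (ε / 2)) (by positivity)
    have h3 : (‖z‖ / (ε / 2)) • ((ε / 2 / ‖z‖) • z) = z := by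
      rw [smul_smul]
      have : ‖z‖ / (ε / 2) * (ε / 2 / ‖z‖) = 1 := by
        field_simp
      rw [this, one_smul]
    rwa [h3] at h2

lemma funk_univ (hC : C = univ) (x y : Fin n → ℝ) : funk C x y = 0 := by
  have hset : {l : ℝ | 0 < l ∧ l • y - x ∈ C} = Ioi 0 := by
    ext l; simp [hC]
  rw [funk, hset, csInf_Ioi, Real.log_zero]

lemma opFunk_univ (hC : C = univ) (M M' : Matrix (Fin n) (Fin n) ℝ) : opFunk C M M' = 0 := by
  have hset : {l : ℝ | 0 < l ∧
      ∀ x ∈ interior C, l • Matrix.vecMul x M' - Matrix.vecMul x M ∈ C} = Ioi 0 := by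
    ext l; simp [hC]
  rw [opFunk, hset, csInf_Ioi, Real.log_zero]

lemma hausT_univ (hC : C = univ) {X Y : Set (Matrix (Fin n) (Fin n) ℝ)}
    (hXne : X.Nonempty) (hYne : Y.Nonempty) : hausT C X Y = 0 := by
  haveI := hXne.to_subtype
  haveI := hYne.to_subtype
  have hT : ∀ M M' : Matrix (Fin n) (Fin n) ℝ, opThompson C M M' = 0 := by
    intro M M'
    rw [opThompson, opFunk_univ hC, opFunk_univ hC, max_self]
  rw [hausT]
  have h1 : (⨆ M : X, ⨅ M' : Y, opThompson C M M') = 0 := by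
    simp only [hT, ciInf_const, ciSup_const]
  have h2 : (⨆ M' : Y, ⨅ M : X, opThompson C M M') = 0 := by
    simp only [hT, ciInf_const, ciSup_const]
  rw [h1, h2, max_self]

lemma mshapley_zero {X Y : Set (Matrix (Fin n) (Fin n) ℝ)}
    (hXne : X.Nonempty) (hYne : Y.Nonempty) :
    mshapley X Y (fun _ => (0:ℝ)) = fun _ => (0:ℝ) := by
  haveI := hXne.to_subtype
  haveI := hYne.to_subtype
  funext x
  rw [mshapley_eq]
  have h1 : ∀ M : Matrix (Fin n) (Fin n) ℝ, supPay Y (fun _ => (0:ℝ)) x M = 0 := by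
    intro M
    rw [supPay, ciSup_const]
  simp only [h1, ciInf_const]

lemma degenerate_case (hCcone : ∀ x ∈ C, ∀ r : ℝ, 0 ≤ r → r • x ∈ C)
    (h0 : (0 : Fin n → ℝ) ∈ interior C)
    {A A' B B' : Set (Matrix (Fin n) (Fin n) ℝ)}
    (hAne : A.Nonempty) (hA'ne : A'.Nonempty) (hBne : B.Nonempty) (hB'ne : B'.Nonempty)
    {xb : Fin n → ℝ} {ρ ρ' : ℝ}
    (hρ : Tendsto (fun k : ℕ => (mshapley A B)^[k] (fun y => funk C y xb) xb / (k : ℝ))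
      atTop (nhds ρ))
    (hρ' : Tendsto (fun k : ℕ => (mshapley A' B')^[k] (fun y => funk C y xb) xb / (k : ℝ))
      atTop (nhds ρ')) :
    |ρ - ρ'| ≤ hausT C A A' + hausT C B B' := by
  have hCuniv : C = univ := degenerate_univ hCcone h0
  have hv0 : (fun y => funk C y xb) = fun _ => (0:ℝ) :=
    funext fun y => funk_univ hCuniv y xb
  have hzero : ∀ (X Y : Set (Matrix (Fin n) (Fin n) ℝ)), X.Nonempty → Y.Nonempty →
      ∀ k : ℕ, (mshapley X Y)^[k] (fun y => funk C y xb) = fun _ => (0:ℝ) := by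
    intro X Y hXne hYne k
    induction k with
    | zero => simpa using hv0
    | succ k ih =>
      rw [Function.iterate_succ_apply', ih, mshapley_zero hXne hYne]
  have hρ0 : ρ = 0 := by
    have h1 : Tendsto (fun k : ℕ => (mshapley A B)^[k] (fun y => funk C y xb) xb / (k : ℝ))
        atTop (nhds 0) := by
      have : (fun k : ℕ => (mshapley A B)^[k] (fun y => funk C y xb) xb / (k : ℝ))
          = fun _ : ℕ => (0:ℝ) := by
        funext k
        rw [hzero A B hAne hBne k]
        simp
      rw [this]
      exact tendsto_const_nhds
    exact tendsto_nhds_unique hρ h1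
  have hρ'0 : ρ' = 0 := by
    have h1 : Tendsto (fun k : ℕ => (mshapley A' B')^[k] (fun y => funk C y xb) xb / (k : ℝ))
        atTop (nhds 0) := by
      have : (fun k : ℕ => (mshapley A' B')^[k] (fun y => funk C y xb) xb / (k : ℝ))
          = fun _ : ℕ => (0:ℝ) := by
        funext k
        rw [hzero A' B' hA'ne hB'ne k]
        simp
      rw [this]
      exact tendsto_const_nhds
    exact tendsto_nhds_unique hρ' h1
  rw [hρ0, hρ'0, sub_zero, abs_zero, hausT_univ hCuniv hAne hA'ne,
    hausT_univ hCuniv hBne hB'ne]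
  norm_num

end Degenerate


/-- the competitive spectral radius of a matrix multiplication game,
as a function of the pair of compact action sets included in a part of `End(int C)`,
is `1`-Lipschitz for the Hausdorff distance induced by the Thompson metric. -/
theorem stmt_8 {n : ℕ} (C : Set (Fin n → ℝ))
    (hCclosed : IsClosed C) (hCconv : Convex ℝ C)
    (hCcone : ∀ x ∈ C, ∀ r : ℝ, 0 ≤ r → r • x ∈ C)
    (hCpointed : ∀ x ∈ C, -x ∈ C → x = 0)
    (hCint : (interior C).Nonempty)
    (P : Set (Matrix (Fin n) (Fin n) ℝ)) (hP : IsOpPart C P)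
    (A A' B B' : Set (Matrix (Fin n) (Fin n) ℝ))
    (hAP : A ⊆ P) (hA'P : A' ⊆ P) (hBP : B ⊆ P) (hB'P : B' ⊆ P)
    (hAc : IsCompact A) (hAne : A.Nonempty) (hA'c : IsCompact A') (hA'ne : A'.Nonempty)
    (hBc : IsCompact B) (hBne : B.Nonempty) (hB'c : IsCompact B') (hB'ne : B'.Nonempty)
    (xb : Fin n → ℝ) (hxb : xb ∈ interior C) (ρ ρ' : ℝ)
    (hρ : Tendsto (fun k : ℕ => (mshapley A B)^[k] (fun y => funk C y xb) xb / (k : ℝ))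
      atTop (nhds ρ))
    (hρ' : Tendsto (fun k : ℕ => (mshapley A' B')^[k] (fun y => funk C y xb) xb / (k : ℝ))
      atTop (nhds ρ')) :
    |ρ - ρ'| ≤ hausT C A A' + hausT C B B' := by
  by_cases h0 : (0 : Fin n → ℝ) ∈ interior C
  · exact degenerate_case hCcone h0 hAne hA'ne hBne hB'ne hρ hρ'
  · have hC : ConeHyp C := ⟨hCclosed, hCconv, hCcone, hCpointed, hCint, h0⟩
    exact main_case hC hP hAP hA'P hBP hB'P hAc hAne hA'c hA'ne hBc hBne hB'c hB'ne
      hxb hρ hρ'
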